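/- Let q ≥ 1 and 0 ≤ k ≤ q. Let Ẽ₁^{(k)} be the matrix obtained from E₁^{⊗k} (a q^k × q^k matrix with rows and columns indexed by [q]^k) by deleting every row and every column whose index tuple contains two equal entries. Then the sum of all entries of Ẽ₁^{(k)} is non-negative. -/

import Mathlib

noncomputable section

namespace ED

/-- The `q × q` matrix all of whose entries are `1/q`. -/
def E0 (q : ℕ) : Matrix (Fin q) (Fin q) ℝ := Matrix.of fun _ _ => 1 / q

/-- `E₁ = I - E₀`. -/
def E1 (q : ℕ) : Matrix (Fin q) (Fin q) ℝ :=
  Matrix.of fun x y => (if x = y then 1 else 0) - 1 / q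

/-- The projector `E_k^{(m)}` of the Hamming association scheme. -/
def Ek (q m k : ℕ) : Matrix (Fin m → Fin q) (Fin m → Fin q) ℝ :=
  Matrix.of fun x y => ∑ S ∈ Finset.powersetCard k (Finset.univ : Finset (Fin m)),
    ∏ i, (if i ∈ S then E1 q (x i) (y i) else E0 q (x i) (y i))

/-- The `q × q²` matrix with all entries `q^{-3/2}`. -/
def F0 (q : ℕ) : Matrix (Fin q) (Fin q × Fin q) ℝ :=
  Matrix.of fun _ _ => ((q : ℝ) * Real.sqrt q)⁻¹

/-- The `q × q²` matrix with entries `q^{-1/2}((E₁)_{x,y₁} + (E₁)_{x,y₂})`. -/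
def F1 (q : ℕ) : Matrix (Fin q) (Fin q × Fin q) ℝ :=
  Matrix.of fun x y => (Real.sqrt q)⁻¹ * (E1 q x y.1 + E1 q x y.2)

/-- `F = F₀ + F₁`. -/
def FF (q : ℕ) : Matrix (Fin q) (Fin q × Fin q) ℝ := F0 q + F1 q

/-- The increasing enumeration of `[n] \ {a,b}`. -/
def embCompl {n : ℕ} (a b : Fin n) (h : a ≠ b) : Fin (n - 2) → Fin n :=
  fun i => (({a, b}ᶜ : Finset (Fin n)).orderIsoOfFin
    (by rw [Finset.card_compl, Finset.card_pair h, Fintype.card_fin]) i : Fin n)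

/-- For a `q^{n-1} × q^n` matrix `G` (rows indexed by `[q] × [q]^{n-2}`, columns by
`([q] × [q]) × [q]^{n-2}`), the matrix `G_{a,b}` with rows indexed by strings
`x ∈ [q]^n` with `x a = x b`, and columns by `[q]^n`. -/
def subMat {n q : ℕ}
    (G : Matrix (Fin q × (Fin (n - 2) → Fin q)) ((Fin q × Fin q) × (Fin (n - 2) → Fin q)) ℝ)
    (a b : Fin n) (h : a ≠ b) :
    Matrix {x : Fin n → Fin q // x a = x b} (Fin n → Fin q) ℝ :=
  Matrix.of fun x y =>
    G (x.1 a, fun i => x.1 (embCompl a b h i)) ((y a, y b), fun i => y (embCompl a b h i))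

/-- The spectral norm (largest singular value) of a real matrix. -/
def specNorm {m n : Type*} [Fintype m] [Fintype n] [DecidableEq n] (A : Matrix m n ℝ) : ℝ :=
  ‖LinearMap.toContinuousLinearMap (Matrix.toEuclideanLin A)‖

end ED


lemma e1_symm' (q : ℕ) (a b : Fin q) : ED.E1 q a b = ED.E1 q b a := by
  simp [ED.E1, eq_comm]

lemma e1_idem' (q : ℕ) (hq : 1 ≤ q) (a b : Fin q) :
    ED.E1 q a b = ∑ c : Fin q, ED.E1 q a c * ED.E1 q c b := by
  have hq0 : (q : ℝ) ≠ 0 := by positivity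
  simp only [ED.E1, Matrix.of_apply]
  have h : ∀ c : Fin q, ((if a = c then (1:ℝ) else 0) - 1/q) * ((if c = b then 1 else 0) - 1/q)
      = (if a = c then (1:ℝ) else 0) * (if c = b then 1 else 0)
        - (if a = c then (1:ℝ) else 0) * (1/q) - (1/q) * (if c = b then 1 else 0) + 1/q * (1/q) :=
    fun c => by ring
  rw [Finset.sum_congr rfl fun c _ => h c]
  simp only [Finset.sum_add_distrib, Finset.sum_sub_distrib, ite_mul, mul_ite, one_mul, mul_one,
    zero_mul, mul_zero, Finset.sum_ite_eq, Finset.sum_ite_eq', Finset.mem_univ, if_true,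
    Finset.sum_const, Finset.card_univ, Fintype.card_fin, nsmul_eq_mul]
  field_simp
  ring

open ED in
/-- The sum of the entries of `E₁^{⊗k}` restricted to rows and columns indexed by tuples
with pairwise distinct entries is non-negative. -/
theorem stmt1 (q k : ℕ) (hq : 1 ≤ q) (hk : k ≤ q) :
    0 ≤ ∑ x ∈ Finset.univ.filter (fun x : Fin k → Fin q => Function.Injective x),
          ∑ y ∈ Finset.univ.filter (fun y : Fin k → Fin q => Function.Injective y),
            ∏ i, E1 q (x i) (y i) := by
  classical
  set T := Finset.univ.filter (fun x : Fin k → Fin q => Function.Injective x) with hT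
  have key : ∑ x ∈ T, ∑ y ∈ T, ∏ i, E1 q (x i) (y i)
      = ∑ z : Fin k → Fin q,
          (∑ x ∈ T, ∏ i, E1 q (x i) (z i)) * (∑ x ∈ T, ∏ i, E1 q (x i) (z i)) := by
    calc ∑ x ∈ T, ∑ y ∈ T, ∏ i, E1 q (x i) (y i)
        = ∑ x ∈ T, ∑ y ∈ T, ∑ z : Fin k → Fin q,
            (∏ i, E1 q (x i) (z i)) * ∏ i, E1 q (z i) (y i) := by
          refine Finset.sum_congr rfl fun x _ => Finset.sum_congr rfl fun y _ => ?_
          rw [show (∏ i, E1 q (x i) (y i))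
              = ∏ i, ∑ c : Fin q, E1 q (x i) c * E1 q c (y i) from
            Finset.prod_congr rfl fun i _ => e1_idem' q hq _ _, Finset.prod_univ_sum]
          simp only [Fintype.piFinset_univ]
          exact Finset.sum_congr rfl fun z _ => Finset.prod_mul_distrib
      _ = ∑ x ∈ T, ∑ z : Fin k → Fin q, ∑ y ∈ T,
            (∏ i, E1 q (x i) (z i)) * ∏ i, E1 q (z i) (y i) := by
          exact Finset.sum_congr rfl fun x _ => Finset.sum_comm
      _ = ∑ z : Fin k → Fin q, ∑ x ∈ T, ∑ y ∈ T,
            (∏ i, E1 q (x i) (z i)) * ∏ i, E1 q (z i) (y i) := Finset.sum_comm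
      _ = ∑ z : Fin k → Fin q,
            (∑ x ∈ T, ∏ i, E1 q (x i) (z i)) * (∑ y ∈ T, ∏ i, E1 q (z i) (y i)) := by
          exact Finset.sum_congr rfl fun z _ => (Finset.sum_mul_sum T T _ _).symm
      _ = ∑ z : Fin k → Fin q,
            (∑ x ∈ T, ∏ i, E1 q (x i) (z i)) * (∑ x ∈ T, ∏ i, E1 q (x i) (z i)) := by
          refine Finset.sum_congr rfl fun z _ => ?_
          congr 1
          exact Finset.sum_congr rfl fun y _ =>
            Finset.prod_congr rfl fun i _ => e1_symm' q _ _
  rw [key]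
  exact Finset.sum_nonneg fun z _ => mul_self_nonneg _
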